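/- arXiv:1002.0549 — 2 statements merged into one kernel-verified Lean document; each statement's English description precedes it below -/
import Mathlib

section
/- Let f : X → X be a continuous map on a compact metric space and U a finite open cover. Then h_L^+(f,U) = limsup_{n→∞} -(1/n) log δ(f^{-n}(U)), where δ denotes the Lebesgue number. -/
open Set Filter Topology Metric
open scoped ENNReal

/-- `U` is an open cover of `X`: a family of open sets whose union is `X`. -/
def IsOpenCover {X : Type*} [MetricSpace X] (U : Set (Set X)) : Prop :=
  (∀ A ∈ U, IsOpen A) ∧ ⋃₀ U = Set.univ

/-- The Lebesgue number of a cover `U`: the largest `δ` such that every open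
ball of radius `δ` is contained in some element of `U`. -/
noncomputable def leb {X : Type*} [MetricSpace X] (U : Set (Set X)) : ℝ≥0∞ :=
  sSup {δ : ℝ≥0∞ | ∀ x : X, ∃ A ∈ U, EMetric.ball x δ ⊆ A}

/-- The cover `{g⁻¹(A) : A ∈ U}`. -/
def preCov {X : Type*} (g : X → X) (U : Set (Set X)) : Set (Set X) :=
  (fun A => g ⁻¹' A) '' U

/-- The join `U ∨ V = {A ∩ B : A ∈ U, B ∈ V}` of two covers. -/
def covJoin {X : Type*} (U V : Set (Set X)) : Set (Set X) :=
  {S | ∃ A ∈ U, ∃ B ∈ V, S = A ∩ B}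

/-- The cover `U_f^n = ⋁_{k=0}^{n-1} f^{-k}(U)`. -/
def covSeq {X : Type*} (f : X → X) (U : Set (Set X)) (n : ℕ) : Set (Set X) :=
  {S | ∃ g : Fin n → Set X, (∀ k, g k ∈ U) ∧ S = ⋂ k : Fin n, (f^[(k : ℕ)]) ⁻¹' g k}

/-- `δ_n(f,U)`, the Lebesgue number of `U_f^n`. -/
noncomputable def lebN {X : Type*} [MetricSpace X] (f : X → X) (U : Set (Set X)) (n : ℕ) : ℝ≥0∞ :=
  leb (covSeq f U n)

/-- `h_L^+(f,U) = limsup_n -(1/n) log δ_n(f,U)`. -/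
noncomputable def hLplus {X : Type*} [MetricSpace X] (f : X → X) (U : Set (Set X)) : EReal :=
  Filter.limsup (fun n : ℕ => ((-Real.log ((lebN f U n).toReal) / n : ℝ) : EReal)) atTop

/-- `h_L^-(f,U) = liminf_n -(1/n) log δ_n(f,U)`. -/
noncomputable def hLminus {X : Type*} [MetricSpace X] (f : X → X) (U : Set (Set X)) : EReal :=
  Filter.liminf (fun n : ℕ => ((-Real.log ((lebN f U n).toReal) / n : ℝ) : EReal)) atTop

/-- `h_L^+(f)`: supremum over finite open covers. -/
noncomputable def hLplusSup {X : Type*} [MetricSpace X] (f : X → X) : EReal :=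
  ⨆ (U : Set (Set X)) (_ : IsOpenCover U ∧ U.Finite), hLplus f U

/-- `h_L^-(f)`: supremum over finite open covers. -/
noncomputable def hLminusSup {X : Type*} [MetricSpace X] (f : X → X) : EReal :=
  ⨆ (U : Set (Set X)) (_ : IsOpenCover U ∧ U.Finite), hLminus f U

/-- The diameter of a cover: supremum of diameters of its elements. -/
noncomputable def covDiam {X : Type*} [MetricSpace X] (U : Set (Set X)) : ℝ≥0∞ :=
  ⨆ A ∈ U, EMetric.diam A

/-- `U` refines `V`: every element of `U` is contained in some element of `V`. -/
def Refines {X : Type*} (U V : Set (Set X)) : Prop :=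
  ∀ A ∈ U, ∃ B ∈ V, A ⊆ B

/-- `N(γ)`: the minimal number of open `γ`-balls needed to cover `X`. -/
noncomputable def covN (X : Type*) [MetricSpace X] (γ : ℝ≥0∞) : ℕ :=
  sInf {n : ℕ | ∃ s : Finset X, s.card = n ∧ ⋃ x ∈ s, EMetric.ball x γ = Set.univ}

/-- `S(U)`: the smallest cardinality of a subcover of `U`. -/
noncomputable def covS {X : Type*} [MetricSpace X] (U : Set (Set X)) : ℕ :=
  sInf {m : ℕ | ∃ W ⊆ U, ⋃₀ W = Set.univ ∧ W.ncard = m}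

/-- `s_n(f,ε)`: maximal cardinality of an `(n,ε)`-separated set. -/
noncomputable def sep {X : Type*} [MetricSpace X] (f : X → X) (n : ℕ) (ε : ℝ) : ℕ :=
  sSup {m : ℕ | ∃ E : Finset X, E.card = m ∧
    ∀ x ∈ E, ∀ y ∈ E, x ≠ y → ∃ k < n, ε < dist (f^[k] x) (f^[k] y)}

/-- Topological entropy via `(n,ε)`-separated sets. -/
noncomputable def topEnt {X : Type*} [MetricSpace X] (f : X → X) : EReal :=
  ⨆ (ε : ℝ) (_ : 0 < ε),
    Filter.limsup (fun n : ℕ => ((Real.log (sep f n ε) / n : ℝ) : EReal)) atTop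

/-- Upper box dimension of `X`. -/
noncomputable def dimB (X : Type*) [MetricSpace X] : EReal :=
  Filter.limsup
    (fun γ : ℝ => ((Real.log (covN X (ENNReal.ofReal γ)) / -Real.log γ : ℝ) : EReal))
    (nhdsWithin (0:ℝ) (Set.Ioi 0))
section LebAux

variable {X : Type*} [MetricSpace X]

lemma leb_mem_down {V : Set (Set X)} {δ δ' : ℝ≥0∞} (h : δ ≤ δ')
    (hδ' : ∀ x : X, ∃ A ∈ V, EMetric.ball x δ' ⊆ A) :
    ∀ x : X, ∃ A ∈ V, EMetric.ball x δ ⊆ A := fun x => by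
  obtain ⟨A, hA, hs⟩ := hδ' x
  exact ⟨A, hA, (EMetric.ball_subset_ball h).trans hs⟩

lemma leb_pos [CompactSpace X] {V : Set (Set X)} (hV : IsOpenCover V) : 0 < leb V := by
  rcases isEmpty_or_nonempty X with h | h
  · have h1 : (1 : ℝ≥0∞) ∈ {δ : ℝ≥0∞ | ∀ x : X, ∃ A ∈ V, EMetric.ball x δ ⊆ A} :=
      fun x => isEmptyElim x
    exact lt_of_lt_of_le zero_lt_one (le_sSup h1)
  · obtain ⟨δ, hδpos, hδ⟩ :=
      lebesgue_number_lemma_of_metric_sUnion isCompact_univ hV.1 hV.2.ge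
    refine lt_of_lt_of_le ?_ (le_sSup (?_ :
        ENNReal.ofReal δ ∈ {δ : ℝ≥0∞ | ∀ x : X, ∃ A ∈ V, EMetric.ball x δ ⊆ A}))
    · exact ENNReal.ofReal_pos.mpr hδpos
    · intro x
      obtain ⟨A, hA, hs⟩ := hδ x (mem_univ x)
      exact ⟨A, hA, fun y hy => hs (Metric.mem_ball.mpr (edist_lt_ofReal.mp (EMetric.mem_ball.mp hy)))⟩

lemma leb_le_diam {V : Set (Set X)} (hne : leb V ≠ ⊤) :
    leb V ≤ EMetric.diam (univ : Set X) := by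
  by_contra hcon
  push_neg at hcon
  obtain ⟨δ, hδmem, hδgt⟩ := lt_sSup_iff.mp hcon
  rcases isEmpty_or_nonempty X with h | h
  · exact hne (top_unique (le_sSup (fun x => isEmptyElim x)))
  · obtain ⟨x₀⟩ := h
    obtain ⟨A, hA, hsub⟩ := hδmem x₀
    have huniv : (univ : Set X) ⊆ A := fun y _ => by
      apply hsub
      exact lt_of_le_of_lt (EMetric.edist_le_diam_of_mem (mem_univ y) (mem_univ x₀)) hδgt
    exact hne (top_unique (le_sSup (fun x => ⟨A, hA, fun y _ => huniv (mem_univ y)⟩)))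

lemma isOpenCover_preCov {U : Set (Set X)} (hU : IsOpenCover U) {g : X → X}
    (hg : Continuous g) : IsOpenCover (preCov g U) := by
  constructor
  · rintro A ⟨B, hB, rfl⟩
    exact (hU.1 B hB).preimage hg
  · show ⋃₀ ((fun A => g ⁻¹' A) '' U) = univ
    rw [sUnion_image, ← preimage_sUnion, hU.2, preimage_univ]

lemma lebN_attains (f : X → X) (U : Set (Set X)) (n : ℕ) (hn : 0 < n) :
    ∃ j : Fin n, lebN f U n = leb (preCov (f^[(j : ℕ)]) U) ∧
      ∀ k : Fin n, lebN f U n ≤ leb (preCov (f^[(k : ℕ)]) U) := by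
  have hne : Nonempty (Fin n) := ⟨⟨0, hn⟩⟩
  have hub : ∀ k : Fin n, lebN f U n ≤ leb (preCov (f^[(k : ℕ)]) U) := by
    intro k
    refine sSup_le fun δ hδ => le_sSup fun x => ?_
    obtain ⟨S, hS, hball⟩ := hδ x
    obtain ⟨g, hg, rfl⟩ := hS
    exact ⟨f^[(k : ℕ)] ⁻¹' g k, ⟨g k, hg k, rfl⟩, hball.trans (iInter_subset _ k)⟩
  obtain ⟨j, hj⟩ := Finite.exists_min fun k : Fin n => leb (preCov (f^[(k : ℕ)]) U)
  refine ⟨j, le_antisymm (hub j) ?_, hub⟩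
  by_contra hcon
  push_neg at hcon
  obtain ⟨δ, h1, h2⟩ := exists_between hcon
  have hmem : ∀ k : Fin n, ∀ x : X, ∃ A ∈ preCov (f^[(k : ℕ)]) U, EMetric.ball x δ ⊆ A := by
    intro k
    have hlt : δ < leb (preCov (f^[(k : ℕ)]) U) := h2.trans_le (hj k)
    obtain ⟨δ', hδ'mem, hδ'⟩ := lt_sSup_iff.mp hlt
    exact leb_mem_down hδ'.le hδ'mem
  have hle : δ ≤ lebN f U n := by
    refine le_sSup fun x => ?_
    have h3 := fun k : Fin n => hmem k x
    choose A hA hsub using h3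
    simp only [preCov, Set.mem_image] at hA
    choose B hB hBA using hA
    refine ⟨⋂ k : Fin n, f^[(k : ℕ)] ⁻¹' B k, ⟨B, hB, rfl⟩, subset_iInter fun k => ?_⟩
    rw [hBA k]
    exact hsub k
  exact absurd hle (not_le.mpr h1)

end LebAux

section LimsupAux

open Filter

lemma ls_le_of_le_add (u v e : ℕ → ℝ) (h : ∀ᶠ n in atTop, u n ≤ v n + e n)
    (he : Tendsto e atTop (nhds 0)) :
    Filter.limsup (fun n => ((u n : ℝ) : EReal)) atTop ≤
      Filter.limsup (fun n => ((v n : ℝ) : EReal)) atTop := by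
  by_contra hcon
  push_neg at hcon
  obtain ⟨β, hβ1, hβ2⟩ := EReal.exists_between_coe_real hcon
  obtain ⟨β₂, hβ₂1, hβ₂2⟩ := EReal.exists_between_coe_real hβ1
  have hβlt : β₂ < β := by exact_mod_cast hβ₂2
  have hv : ∀ᶠ n in atTop, v n < β₂ := by
    filter_upwards [eventually_lt_of_limsup_lt hβ₂1] with n hn
    exact_mod_cast hn
  have heps : ∀ᶠ n in atTop, e n < β - β₂ := he.eventually_lt_const (by linarith)
  have hle : Filter.limsup (fun n => ((u n : ℝ) : EReal)) atTop ≤ (β : EReal) := by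
    refine limsup_le_of_le (by isBoundedDefault) ?_
    filter_upwards [h, hv, heps] with n h1 h2 h3
    have : u n ≤ β := by linarith
    exact_mod_cast this
  exact absurd hle (not_le.mpr hβ2)

lemma ls_ge_of_tendsto (u v : ℕ → ℝ) (γ : ℝ) (h : ∀ᶠ n in atTop, v n ≤ u n)
    (hv : Tendsto v atTop (nhds γ)) :
    (γ : EReal) ≤ Filter.limsup (fun n => ((u n : ℝ) : EReal)) atTop := by
  have h1 : Filter.liminf (fun n => ((v n : ℝ) : EReal)) atTop = (γ : EReal) :=
    (EReal.tendsto_coe.mpr hv).liminf_eq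
  calc (γ : EReal) = Filter.liminf (fun n => ((v n : ℝ) : EReal)) atTop := h1.symm
    _ ≤ Filter.liminf (fun n => ((u n : ℝ) : EReal)) atTop := by
        exact liminf_le_liminf (by filter_upwards [h] with n hn; exact_mod_cast hn)
    _ ≤ Filter.limsup (fun n => ((u n : ℝ) : EReal)) atTop := by exact liminf_le_limsup

lemma ls_rec_max_le (d : ℕ → ℝ) (hd : ∀ n, 0 ≤ d n)
    (r : ℕ → ℝ) (hr0 : r 0 = 0) (hrs : ∀ n, r (n + 1) = max (r n) (d n)) :
    Filter.limsup (fun n : ℕ => ((r n / n : ℝ) : EReal)) atTop ≤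
      Filter.limsup (fun n : ℕ => ((d n / n : ℝ) : EReal)) atTop := by
  have hrpos : ∀ n, 0 ≤ r n := by
    intro n
    induction n with
    | zero => rw [hr0]
    | succ n ih => rw [hrs]; exact le_trans ih (le_max_left _ _)
  by_contra hcon
  push_neg at hcon
  obtain ⟨β, hβ1, hβ2⟩ := EReal.exists_between_coe_real hcon
  have h0 : (0 : EReal) ≤ Filter.limsup (fun n : ℕ => ((d n / n : ℝ) : EReal)) atTop := by
    have : ((0 : ℝ) : EReal) ≤ _ := ls_ge_of_tendsto (fun n : ℕ => d n / n) (fun _ => 0) 0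
      (Eventually.of_forall fun n => div_nonneg (hd n) (Nat.cast_nonneg n))
      tendsto_const_nhds
    simpa using this
  have hβpos : 0 < β := by exact_mod_cast lt_of_le_of_lt h0 hβ1
  have hev : ∀ᶠ n : ℕ in atTop, d n / n < β := by
    filter_upwards [eventually_lt_of_limsup_lt hβ1] with n hn
    exact_mod_cast hn
  obtain ⟨K, hK⟩ := eventually_atTop.mp hev
  set K' := max K 1 with hK'
  have hd_lt : ∀ n : ℕ, K' ≤ n → d n ≤ β * n := by
    intro n hn
    have hn1 : (1 : ℕ) ≤ n := le_trans (le_max_right K 1) hn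
    have hnpos : (0 : ℝ) < n := by exact_mod_cast hn1
    have hlt := hK n (le_trans (le_max_left K 1) hn)
    have := (div_lt_iff₀ hnpos).mp hlt
    linarith
  have hbound : ∀ n : ℕ, K' ≤ n → r n ≤ r K' + β * n := by
    intro n hn
    induction n, hn using Nat.le_induction with
    | base =>
      have : (0 : ℝ) ≤ β * K' := mul_nonneg hβpos.le (Nat.cast_nonneg K')
      linarith
    | succ n hn ih =>
      have h2 : d n ≤ β * n := hd_lt n hn
      have hcast : ((n + 1 : ℕ) : ℝ) = (n : ℝ) + 1 := by push_cast; ring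
      have hexp : β * ((n : ℝ) + 1) = β * n + β := by ring
      rw [hrs, hcast, hexp]
      have hr' : 0 ≤ r K' := hrpos K'
      apply max_le <;> linarith [hβpos.le]
  have hfin : ∀ᶠ n : ℕ in atTop, r n / n ≤ β + r K' / n := by
    filter_upwards [eventually_ge_atTop (max K' 1)] with n hn
    have hn1 : (1 : ℕ) ≤ n := le_trans (le_max_right K' 1) hn
    have hnpos : (0 : ℝ) < n := by exact_mod_cast hn1
    have h1 := hbound n (le_trans (le_max_left K' 1) hn)
    rw [div_le_iff₀ hnpos]
    have : (β + r K' / n) * n = β * n + r K' := by field_simp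
    rw [this]
    linarith
  have hls : Filter.limsup (fun n : ℕ => ((r n / n : ℝ) : EReal)) atTop ≤ (β : EReal) := by
    have := ls_le_of_le_add (fun n : ℕ => r n / n) (fun _ => β) (fun n : ℕ => r K' / n)
      (by filter_upwards [hfin] with n hn; linarith)
      (tendsto_const_div_atTop_nhds_zero_nat _)
    rwa [limsup_const] at this
  exact absurd hls (not_le.mpr hβ2)

end LimsupAux
section CoreAux

/-- Running maximum of a sequence with initial value `0`. -/
def recMax (d : ℕ → ℝ) : ℕ → ℝ
  | 0 => 0
  | n + 1 => max (recMax d n) (d n)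

lemma recMax_nonneg (d : ℕ → ℝ) (n : ℕ) : 0 ≤ recMax d n := by
  induction n with
  | zero => exact le_refl 0
  | succ n ih => exact le_trans ih (le_max_left _ _)

lemma le_recMax (d : ℕ → ℝ) {k n : ℕ} (h : k < n) : d k ≤ recMax d n := by
  induction n with
  | zero => omega
  | succ n ih =>
    rcases Nat.lt_succ_iff_lt_or_eq.mp h with h' | h'
    · exact le_trans (ih h') (le_max_left _ _)
    · subst h'; exact le_max_right _ _

lemma my_div_le_div {a b n : ℝ} (h : a ≤ b) (hn : 0 ≤ n) : a / n ≤ b / n := by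
  rw [div_eq_mul_inv, div_eq_mul_inv]
  exact mul_le_mul_of_nonneg_right h (inv_nonneg.mpr hn)

lemma core_limsup (c M : ℕ → ℝ) (C : ℝ) (hC0 : 0 ≤ C)
    (hclb : ∀ k, -C ≤ c k)
    (hattain : ∀ n, 0 < n → ∃ j, j < n ∧ M n = c j)
    (hstep : ∀ n, 0 < c n → c n ≤ M (n + 1)) :
    Filter.limsup (fun n : ℕ => ((M n / n : ℝ) : EReal)) atTop =
      Filter.limsup (fun n : ℕ => ((c n / n : ℝ) : EReal)) atTop := by
  have hMlb : ∀ n, 0 < n → -C ≤ M n := by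
    intro n hn
    obtain ⟨j, _, hj⟩ := hattain n hn
    rw [hj]; exact hclb j
  apply le_antisymm
  · -- upper bound
    have hstep1 : Filter.limsup (fun n : ℕ => ((M n / n : ℝ) : EReal)) atTop ≤
        Filter.limsup (fun n : ℕ => ((recMax (fun k => max (c k) 0) n / n : ℝ) : EReal)) atTop := by
      have hev : ∀ᶠ n : ℕ in atTop, ((M n / n : ℝ) : EReal) ≤
          ((recMax (fun k => max (c k) 0) n / n : ℝ) : EReal) := by
        filter_upwards [Filter.eventually_ge_atTop 1] with n hn
        have hnpos : (0 : ℝ) ≤ (n : ℝ) := Nat.cast_nonneg n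
        obtain ⟨j, hjn, hj⟩ := hattain n hn
        have hMr : M n ≤ recMax (fun k => max (c k) 0) n := by
          rw [hj]
          exact le_trans (le_max_left _ _) (le_recMax (d := fun k => max (c k) 0) hjn)
        exact_mod_cast my_div_le_div hMr hnpos
      exact Filter.limsup_le_limsup hev
    have hstep2 := ls_rec_max_le (fun k => max (c k) 0) (fun n => le_max_right _ _)
      (recMax (fun k => max (c k) 0)) rfl (fun _ => rfl)
    have hstep3 : Filter.limsup (fun n : ℕ => ((max (c n) 0 / n : ℝ) : EReal)) atTop ≤
        Filter.limsup (fun n : ℕ => ((c n / n : ℝ) : EReal)) atTop := by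
      apply ls_le_of_le_add (fun n : ℕ => max (c n) 0 / n) (fun n : ℕ => c n / n)
        (fun n : ℕ => C / n) ?_ (tendsto_const_div_atTop_nhds_zero_nat C)
      filter_upwards [Filter.eventually_ge_atTop 1] with n hn
      have hn1 : (0 : ℝ) ≤ (n : ℝ) := Nat.cast_nonneg n
      have h1 : max (c n) 0 ≤ c n + C := by
        have := hclb n
        apply max_le <;> linarith
      calc max (c n) 0 / n ≤ (c n + C) / n := my_div_le_div h1 hn1
        _ = c n / n + C / n := add_div _ _ _
    exact le_trans hstep1 (le_trans hstep2 hstep3)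
  · -- lower bound
    by_contra hcon
    push_neg at hcon
    obtain ⟨β, hβ1, hβ2⟩ := EReal.exists_between_coe_real hcon
    obtain ⟨β', hβ'1, hβ'2⟩ := EReal.exists_between_coe_real hβ2
    have hββ' : β < β' := by exact_mod_cast hβ'1
    have h0a : (0 : EReal) ≤ Filter.limsup (fun n : ℕ => ((M n / n : ℝ) : EReal)) atTop := by
      have h := ls_ge_of_tendsto (fun n : ℕ => M n / n) (fun n : ℕ => -C / n) 0 ?_ ?_
      · simpa using h
      · filter_upwards [Filter.eventually_ge_atTop 1] with n hn
        exact my_div_le_div (hMlb n hn) (Nat.cast_nonneg n)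
      · exact tendsto_const_div_atTop_nhds_zero_nat (-C)
    have hβpos : (0 : ℝ) < β := by exact_mod_cast lt_of_le_of_lt h0a hβ1
    have hβ'β : (0 : ℝ) < β' - β := by linarith
    have hfreq : ∃ᶠ n in atTop, (β' : EReal) < ((c n / n : ℝ) : EReal) :=
      Filter.frequently_lt_of_lt_limsup (by isBoundedDefault) hβ'2
    have hev : ∀ᶠ n : ℕ in atTop, 1 ≤ n ∧ β / (β' - β) ≤ (n : ℝ) :=
      (Filter.eventually_ge_atTop 1).and
        (tendsto_natCast_atTop_atTop.eventually_ge_atTop (β / (β' - β)))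
    have hfr2 := hfreq.and_eventually hev
    have hkey : ∃ᶠ m : ℕ in atTop, β ≤ M m / m := by
      rw [Filter.frequently_atTop] at hfr2 ⊢
      intro N
      obtain ⟨n, hnN, hc, hn1, hnb⟩ := hfr2 N
      refine ⟨n + 1, le_trans hnN (Nat.le_succ n), ?_⟩
      have hnpos : (0 : ℝ) < (n : ℝ) := by exact_mod_cast hn1
      have hcn : β' * n < c n := by
        have hc' : β' < c n / n := by exact_mod_cast hc
        exact (lt_div_iff₀ hnpos).mp hc'
      have hb'npos : (0 : ℝ) < β' * n := mul_pos (by linarith) hnpos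
      have hcpos : 0 < c n := lt_trans hb'npos hcn
      have h2 := hstep n hcpos
      have hn1pos : (0 : ℝ) < ((n + 1 : ℕ) : ℝ) := by positivity
      rw [le_div_iff₀ hn1pos]
      have hb := (div_le_iff₀ hβ'β).mp hnb
      have hkey2 : β * ((n : ℝ) + 1) ≤ β' * n := by nlinarith
      push_cast
      calc β * ((n : ℝ) + 1) ≤ β' * n := hkey2
        _ ≤ c n := hcn.le
        _ ≤ M (n + 1) := h2
    have hfin : (β : EReal) ≤ Filter.limsup (fun n : ℕ => ((M n / n : ℝ) : EReal)) atTop := by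
      exact Filter.le_limsup_of_frequently_le (hkey.mono fun m hm => by exact_mod_cast hm)
    exact absurd hfin (not_le.mpr hβ1)

end CoreAux
/-- `h_L^+(f,U) = limsup_n -(1/n) log δ(f^{-n}(U))`. -/
theorem hLplus_eq_limsup_preCov {X : Type*} [MetricSpace X] [CompactSpace X]
    (f : X → X) (hf : Continuous f) (U : Set (Set X))
    (hU : IsOpenCover U) (hUfin : U.Finite) :
    hLplus f U =
      Filter.limsup
        (fun n : ℕ => ((-Real.log ((leb (preCov (f^[n]) U)).toReal) / n : ℝ) : EReal))
        Filter.atTop := by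
  have hcov : ∀ k : ℕ, IsOpenCover (preCov (f^[k]) U) :=
    fun k => isOpenCover_preCov hU (hf.iterate k)
  have hLpos : ∀ k : ℕ, (0 : ℝ≥0∞) < leb (preCov (f^[k]) U) := fun k => leb_pos (hcov k)
  have hdiam_ne : EMetric.diam (univ : Set X) ≠ ⊤ := isCompact_univ.isBounded.ediam_ne_top
  have hC0 : 0 ≤ Real.log (max 1 (EMetric.diam (univ : Set X)).toReal) :=
    Real.log_nonneg (le_max_left _ _)
  have hctop : ∀ k : ℕ, leb (preCov (f^[k]) U) = ⊤ →
      -Real.log ((leb (preCov (f^[k]) U)).toReal) = 0 := by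
    intro k hk
    rw [hk]
    simp
  have hclb : ∀ k : ℕ, -Real.log (max 1 (EMetric.diam (univ : Set X)).toReal) ≤
      -Real.log ((leb (preCov (f^[k]) U)).toReal) := by
    intro k
    by_cases htop : leb (preCov (f^[k]) U) = ⊤
    · rw [hctop k htop]; linarith
    · have h1 : (leb (preCov (f^[k]) U)).toReal ≤
          max 1 (EMetric.diam (univ : Set X)).toReal :=
        le_trans (ENNReal.toReal_mono hdiam_ne (leb_le_diam htop)) (le_max_right _ _)
      have h2 : 0 < (leb (preCov (f^[k]) U)).toReal :=
        ENNReal.toReal_pos (hLpos k).ne' htop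
      have := Real.log_le_log h2 h1
      linarith
  have hattain : ∀ n : ℕ, 0 < n → ∃ j, j < n ∧
      -Real.log ((lebN f U n).toReal) = -Real.log ((leb (preCov (f^[j]) U)).toReal) := by
    intro n hn
    obtain ⟨j, hje, _⟩ := lebN_attains f U n hn
    exact ⟨(j : ℕ), j.isLt, by rw [hje]⟩
  have hstep : ∀ n : ℕ, 0 < -Real.log ((leb (preCov (f^[n]) U)).toReal) →
      -Real.log ((leb (preCov (f^[n]) U)).toReal) ≤ -Real.log ((lebN f U (n + 1)).toReal) := by
    intro n hpos
    have htop : leb (preCov (f^[n]) U) ≠ ⊤ := by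
      intro hh
      rw [hctop n hh] at hpos
      exact lt_irrefl 0 hpos
    obtain ⟨j, hje, hjle⟩ := lebN_attains f U (n + 1) n.succ_pos
    have hle : lebN f U (n + 1) ≤ leb (preCov (f^[n]) U) := by
      have := hjle ⟨n, n.lt_succ_self⟩
      simpa using this
    have hpos' : (0 : ℝ≥0∞) < lebN f U (n + 1) := by
      rw [hje]; exact hLpos _
    have hnetop : lebN f U (n + 1) ≠ ⊤ := fun hh => htop (top_le_iff.mp (hh ▸ hle))
    have h1 : (lebN f U (n + 1)).toReal ≤ (leb (preCov (f^[n]) U)).toReal :=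
      ENNReal.toReal_mono htop hle
    have h2 : 0 < (lebN f U (n + 1)).toReal := ENNReal.toReal_pos hpos'.ne' hnetop
    exact neg_le_neg (Real.log_le_log h2 h1)
  exact core_limsup (fun k => -Real.log ((leb (preCov (f^[k]) U)).toReal))
    (fun n => -Real.log ((lebN f U n).toReal))
    (Real.log (max 1 (EMetric.diam (univ : Set X)).toReal)) hC0 hclb hattain hstep
end

section
/- Let f be a continuous map on a compact metric space and (U_k) a sequence of finite open covers with diam(U_k) → 0. Then h_L^+(f, U_k) → h_L^+(f) and h_L^-(f, U_k) → h_L^-(f) as k → ∞. -/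
open Set Filter Topology Metric
open scoped ENNReal

section Aux

variable {X : Type*} [MetricSpace X]

lemma leb_pos_aux [CompactSpace X] {W : Set (Set X)} (hW : IsOpenCover W) : 0 < leb W := by
  obtain ⟨δ, δpos, hδ⟩ := lebesgue_number_lemma_of_metric_sUnion isCompact_univ
    (fun t ht => hW.1 t ht) (le_of_eq hW.2.symm)
  refine lt_of_lt_of_le (ENNReal.ofReal_pos.2 δpos) (le_sSup ?_)
  intro x
  obtain ⟨t, ht, hsub⟩ := hδ x (mem_univ x)
  exact ⟨t, ht, fun y hy => hsub (Metric.mem_ball.2 (edist_lt_ofReal.1 hy))⟩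

lemma covSeq_isOpenCover {f : X → X} (hf : Continuous f) {W : Set (Set X)}
    (hW : IsOpenCover W) (n : ℕ) : IsOpenCover (covSeq f W n) := by
  constructor
  · rintro A ⟨g, hg, rfl⟩
    exact isOpen_iInter_of_finite fun k => (hW.1 _ (hg k)).preimage (hf.iterate _)
  · apply Set.eq_univ_of_forall
    intro x
    have h : ∀ k : Fin n, ∃ A ∈ W, f^[(k : ℕ)] x ∈ A := fun k => by
      have : f^[(k : ℕ)] x ∈ ⋃₀ W := hW.2.symm ▸ mem_univ _
      exact this
    choose g hg hx using h
    exact ⟨_, ⟨g, hg, rfl⟩, Set.mem_iInter.2 fun k => hx k⟩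

lemma leb_mono_refines {U V : Set (Set X)} (h : Refines U V) : leb U ≤ leb V := by
  refine sSup_le_sSup fun δ hδ x => ?_
  obtain ⟨A, hA, hball⟩ := hδ x
  obtain ⟨B, hB, hAB⟩ := h A hA
  exact ⟨B, hB, hball.trans hAB⟩

lemma refines_covSeq {f : X → X} {U V : Set (Set X)} (h : Refines U V) (n : ℕ) :
    Refines (covSeq f U n) (covSeq f V n) := by
  rintro A ⟨g, hg, rfl⟩
  choose g' hg' hsub using fun k => h (g k) (hg k)
  exact ⟨_, ⟨g', hg', rfl⟩, Set.iInter_mono fun k => Set.preimage_mono (hsub k)⟩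

lemma covSeq_refines_of_le {f : X → X} {W : Set (Set X)} {m n : ℕ} (h : m ≤ n) :
    Refines (covSeq f W n) (covSeq f W m) := by
  rintro A ⟨g, hg, rfl⟩
  refine ⟨_, ⟨fun k => g (Fin.castLE h k), fun k => hg _, rfl⟩, fun x hx => ?_⟩
  simp only [Set.mem_iInter] at hx ⊢
  exact fun k => hx (Fin.castLE h k)

lemma lebN_antitone {f : X → X} {W : Set (Set X)} : Antitone (lebN f W) :=
  fun _ _ h => leb_mono_refines (covSeq_refines_of_le h)

lemma hLminus_nonneg [CompactSpace X] {f : X → X} (hf : Continuous f) {W : Set (Set X)}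
    (hW : IsOpenCover W) : 0 ≤ hLminus f W := by
  by_cases hinf : ∀ n, lebN f W n = ∞
  · have hz : (fun n : ℕ => ((-Real.log ((lebN f W n).toReal) / n : ℝ) : EReal))
        = fun _ => (0 : EReal) := funext fun n => by simp [hinf n]
    unfold hLminus
    rw [hz, liminf_const]
  · push_neg at hinf
    obtain ⟨N, hN⟩ := hinf
    set L := Real.log ((lebN f W N).toReal) with hL
    have hlim : Tendsto (fun n : ℕ => ((-L / n : ℝ) : EReal)) atTop (nhds (0 : EReal)) := by
      have h1 := tendsto_const_div_atTop_nhds_zero_nat (-L)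
      have h2 := (continuous_coe_real_ereal.tendsto (0 : ℝ)).comp h1
      simpa [Function.comp_def] using h2
    have hle : ∀ᶠ n : ℕ in atTop, ((-L / n : ℝ) : EReal)
        ≤ ((-Real.log ((lebN f W n).toReal) / n : ℝ) : EReal) := by
      filter_upwards [eventually_ge_atTop N] with n hn
      have h1 : lebN f W n ≤ lebN f W N := lebN_antitone hn
      have h2 : lebN f W n ≠ ∞ := ne_top_of_le_ne_top hN h1
      have h3 : (0 : ℝ) < (lebN f W n).toReal :=
        ENNReal.toReal_pos (leb_pos_aux (covSeq_isOpenCover hf hW n)).ne' h2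
      have h4 : Real.log ((lebN f W n).toReal) ≤ L :=
        Real.log_le_log h3 (ENNReal.toReal_mono hN h1)
      refine EReal.coe_le_coe_iff.2 ?_
      gcongr
    calc (0 : EReal) = liminf (fun n : ℕ => ((-L / n : ℝ) : EReal)) atTop := hlim.liminf_eq.symm
      _ ≤ hLminus f W := liminf_le_liminf hle

lemma hLminus_le_hLplus {f : X → X} {W : Set (Set X)} : hLminus f W ≤ hLplus f W :=
  liminf_le_limsup

lemma hL_le_of_refines [CompactSpace X] {f : X → X} (hf : Continuous f) {U V : Set (Set X)}
    (hU : IsOpenCover U) (hV : IsOpenCover V) (hr : Refines U V) :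
    hLplus f V ≤ hLplus f U ∧ hLminus f V ≤ hLminus f U := by
  by_cases hinf : ∀ n, lebN f V n = ∞
  · have hz : (fun n : ℕ => ((-Real.log ((lebN f V n).toReal) / n : ℝ) : EReal))
        = fun _ => (0 : EReal) := funext fun n => by simp [hinf n]
    have h0 : 0 ≤ hLminus f U := hLminus_nonneg hf hU
    constructor
    · unfold hLplus
      rw [hz, limsup_const]
      exact h0.trans hLminus_le_hLplus
    · unfold hLminus
      rw [hz, liminf_const]
      exact h0
  · push_neg at hinf
    obtain ⟨N, hN⟩ := hinf
    have hle : ∀ᶠ n in atTop, ((-Real.log ((lebN f V n).toReal) / n : ℝ) : EReal)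
        ≤ ((-Real.log ((lebN f U n).toReal) / n : ℝ) : EReal) := by
      filter_upwards [eventually_ge_atTop N] with n hn
      have hVle : lebN f V n ≤ lebN f V N := lebN_antitone hn
      have hVne : lebN f V n ≠ ∞ := ne_top_of_le_ne_top hN hVle
      have hUV : lebN f U n ≤ lebN f V n := leb_mono_refines (refines_covSeq hr n)
      have hUne : lebN f U n ≠ ∞ := ne_top_of_le_ne_top hVne hUV
      have hUpos : (0 : ℝ) < (lebN f U n).toReal :=
        ENNReal.toReal_pos (leb_pos_aux (covSeq_isOpenCover hf hU n)).ne' hUne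
      have hlog : Real.log ((lebN f U n).toReal) ≤ Real.log ((lebN f V n).toReal) :=
        Real.log_le_log hUpos (ENNReal.toReal_mono hVne hUV)
      refine EReal.coe_le_coe_iff.2 ?_
      gcongr
    exact ⟨limsup_le_limsup hle, liminf_le_liminf hle⟩

lemma refines_of_covDiam_lt [Nonempty X] {U V : Set (Set X)} (h : covDiam U < leb V) :
    Refines U V := by
  obtain ⟨δ, hδmem, hδ⟩ := lt_sSup_iff.1 h
  intro A hA
  rcases A.eq_empty_or_nonempty with rfl | ⟨x, hx⟩
  · obtain ⟨x⟩ := ‹Nonempty X›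
    obtain ⟨B, hB, -⟩ := hδmem x
    exact ⟨B, hB, empty_subset _⟩
  · obtain ⟨B, hB, hball⟩ := hδmem x
    refine ⟨B, hB, fun y hy => hball ?_⟩
    have h1 : edist y x ≤ EMetric.diam A := EMetric.edist_le_diam_of_mem hy hx
    have h2 : EMetric.diam A ≤ covDiam U := le_iSup₂_of_le A hA le_rfl
    exact EMetric.mem_ball.2 (lt_of_le_of_lt (h1.trans h2) hδ)

lemma hLplus_of_isEmpty [IsEmpty X] (f : X → X) (W : Set (Set X)) :
    hLplus f W = 0 ∧ hLminus f W = 0 := by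
  have hleb : ∀ n, lebN f W n = ∞ := by
    intro n
    have : {δ : ℝ≥0∞ | ∀ x : X, ∃ A ∈ covSeq f W n, EMetric.ball x δ ⊆ A} = Set.univ :=
      Set.eq_univ_of_forall fun δ x => isEmptyElim x
    simp [lebN, leb, this]
  have hz : (fun n : ℕ => ((-Real.log ((lebN f W n).toReal) / n : ℝ) : EReal))
      = fun _ => (0 : EReal) := funext fun n => by simp [hleb n]
  constructor
  · unfold hLplus; rw [hz, limsup_const]
  · unfold hLminus; rw [hz, liminf_const]

end Aux

/-- If `diam(U_k) → 0` then `h_L^±(f,U_k) → h_L^±(f)`. -/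
theorem hL_tendsto_of_covDiam_tendsto_zero {X : Type*} [MetricSpace X] [CompactSpace X]
    (f : X → X) (hf : Continuous f) (U : ℕ → Set (Set X))
    (hU : ∀ k, IsOpenCover (U k)) (hUfin : ∀ k, (U k).Finite)
    (hdiam : Filter.Tendsto (fun k => covDiam (U k)) Filter.atTop (nhds (0 : ℝ≥0∞))) :
    Filter.Tendsto (fun k => hLplus f (U k)) Filter.atTop (nhds (hLplusSup f)) ∧
    Filter.Tendsto (fun k => hLminus f (U k)) Filter.atTop (nhds (hLminusSup f)) := by
  rcases isEmpty_or_nonempty X with hX | hX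
  · have hcov : IsOpenCover (∅ : Set (Set X)) :=
      ⟨fun A hA => absurd hA (Set.notMem_empty A), by
        rw [Set.sUnion_empty]; exact (Set.univ_eq_empty_iff.2 hX).symm⟩
    have hplusSup : hLplusSup f = 0 := by
      refine le_antisymm (iSup₂_le fun V _ => le_of_eq (hLplus_of_isEmpty f V).1) ?_
      exact le_iSup₂_of_le ∅ ⟨hcov, Set.finite_empty⟩ (le_of_eq (hLplus_of_isEmpty f ∅).1.symm)
    have hminusSup : hLminusSup f = 0 := by
      refine le_antisymm (iSup₂_le fun V _ => le_of_eq (hLplus_of_isEmpty f V).2) ?_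
      exact le_iSup₂_of_le ∅ ⟨hcov, Set.finite_empty⟩ (le_of_eq (hLplus_of_isEmpty f ∅).2.symm)
    constructor
    · simp only [fun k => (hLplus_of_isEmpty f (U k)).1, hplusSup]
      exact tendsto_const_nhds
    · simp only [fun k => (hLplus_of_isEmpty f (U k)).2, hminusSup]
      exact tendsto_const_nhds
  · have key : ∀ V : Set (Set X), IsOpenCover V →
        ∀ᶠ k in atTop, hLplus f V ≤ hLplus f (U k) ∧ hLminus f V ≤ hLminus f (U k) := by
      intro V hV
      filter_upwards [hdiam.eventually_lt_const (leb_pos_aux hV)] with k hk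
      exact hL_le_of_refines hf (hU k) hV (refines_of_covDiam_lt hk)
    have lowerP : hLplusSup f ≤ liminf (fun k => hLplus f (U k)) atTop := by
      refine iSup₂_le fun V hVp => ?_
      calc hLplus f V = liminf (fun _ : ℕ => hLplus f V) atTop := (liminf_const _).symm
        _ ≤ liminf (fun k => hLplus f (U k)) atTop :=
          liminf_le_liminf ((key V hVp.1).mono fun k h => h.1)
    have lowerM : hLminusSup f ≤ liminf (fun k => hLminus f (U k)) atTop := by
      refine iSup₂_le fun V hVp => ?_
      calc hLminus f V = liminf (fun _ : ℕ => hLminus f V) atTop := (liminf_const _).symm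
        _ ≤ liminf (fun k => hLminus f (U k)) atTop :=
          liminf_le_liminf ((key V hVp.1).mono fun k h => h.2)
    have upperP : limsup (fun k => hLplus f (U k)) atTop ≤ hLplusSup f := by
      calc limsup (fun k => hLplus f (U k)) atTop
          ≤ limsup (fun _ : ℕ => hLplusSup f) atTop :=
            limsup_le_limsup (Eventually.of_forall fun k =>
              le_iSup₂_of_le (U k) ⟨hU k, hUfin k⟩ le_rfl)
        _ = hLplusSup f := limsup_const _
    have upperM : limsup (fun k => hLminus f (U k)) atTop ≤ hLminusSup f := by
      calc limsup (fun k => hLminus f (U k)) atTop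
          ≤ limsup (fun _ : ℕ => hLminusSup f) atTop :=
            limsup_le_limsup (Eventually.of_forall fun k =>
              le_iSup₂_of_le (U k) ⟨hU k, hUfin k⟩ le_rfl)
        _ = hLminusSup f := limsup_const _
    exact ⟨tendsto_of_le_liminf_of_limsup_le lowerP upperP,
      tendsto_of_le_liminf_of_limsup_le lowerM upperM⟩
end
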